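/- Let X be a finite set, D* a probability distribution on X × {0,1} with random pair (x, y*), and p : X → [0,1] a predictor. Then EMD(J*, J^p)/2 ≤ smCE(p, D*) ≤ EMD(J*, J^p), where EMD is the earthmover (1-Wasserstein) distance between distributions on [0,1] × {0,1} with respect to the metric ℓ1((v,y),(v',y')) = |v − v'| + |y − y'|. -/

import Mathlib

set_option linter.unusedSectionVars false


open scoped Classical
open Finset Set

noncomputable section

/-- `D` is a probability distribution on `X × {0,1}` (labels as `Bool`). -/
def IsDistribution {X : Type} [Fintype X] (D : X × Bool → ℝ) : Prop :=
  (∀ z, 0 ≤ D z) ∧ (∑ z : X × Bool, D z) = 1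

/-- A predictor takes values in `[0,1]`. -/
def IsPredictor {X : Type} (p : X → ℝ) : Prop := ∀ x, p x ∈ Set.Icc (0 : ℝ) 1

/-- Numerical value of a Boolean label. -/
def yval (y : Bool) : ℝ := if y then 1 else 0

/-- Marginal mass of a point `x`. -/
def massx {X : Type} (D : X × Bool → ℝ) (x : X) : ℝ := D (x, false) + D (x, true)

/-- Expectation of `f(x, y)` under `D`. -/
def expval {X : Type} [Fintype X] (D : X × Bool → ℝ) (f : X × Bool → ℝ) : ℝ :=
  ∑ z : X × Bool, D z * f z

/-- The distribution of `(x, y^p)` where, conditioned on `x`, the label `y^p` is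
Bernoulli with parameter `p(x)`; its pushforward under `(x,y) ↦ (p x, y)` is `J^p`. -/
def bernD {X : Type} (D : X × Bool → ℝ) (p : X → ℝ) : X × Bool → ℝ :=
  fun z => massx D z.1 * (if z.2 then p z.1 else 1 - p z.1)

/-- `γ` is a coupling of the two distributions `D1` and `D2` on `X × Bool`. -/
def IsCoupling {X : Type} [Fintype X] (D1 D2 : X × Bool → ℝ)
    (γ : (X × Bool) × (X × Bool) → ℝ) : Prop :=
  (∀ w, 0 ≤ γ w) ∧ (∀ z, (∑ z' : X × Bool, γ (z, z')) = D1 z) ∧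
    (∀ z', (∑ z : X × Bool, γ (z, z')) = D2 z')

/-- The earthmover (1-Wasserstein) distance between `J*` and `J^p`, with respect to the
metric `ℓ1((v,y),(v',y')) = |v - v'| + |y - y'|` on `[0,1] × {0,1}`: the infimum, over
couplings of the two joint distributions, of the expected `ℓ1` cost. -/
def EMD {X : Type} [Fintype X] (D : X × Bool → ℝ) (p : X → ℝ) : ℝ :=
  sInf {c : ℝ | ∃ γ : (X × Bool) × (X × Bool) → ℝ, IsCoupling D (bernD D p) γ ∧
    c = ∑ w : (X × Bool) × (X × Bool),
      γ w * (|p w.1.1 - p w.2.1| + |yval w.1.2 - yval w.2.2|)}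

/-- The smooth calibration error `smCE(p, D*) = max_{w ∈ L} |E[w(p(x)) · (y* - p(x))]|`,
where `L` is the family of `1`-Lipschitz functions from `[0,1]` to `[-1,1]`. -/
def smCE {X : Type} [Fintype X] (D : X × Bool → ℝ) (p : X → ℝ) : ℝ :=
  sSup {e : ℝ | ∃ w : ℝ → ℝ,
    (∀ v ∈ Set.Icc (0 : ℝ) 1, w v ∈ Set.Icc (-1 : ℝ) 1) ∧
    (∀ v ∈ Set.Icc (0 : ℝ) 1, ∀ v' ∈ Set.Icc (0 : ℝ) 1, |w v - w v'| ≤ |v - v'|) ∧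
    e = |expval D (fun z => w (p z.1) * (yval z.2 - p z.1))|}

/-! ### Auxiliary development -/

section AuxDev

variable {X : Type} [Fintype X]

/-- The ground cost on `(X × Bool)` induced by `p`. -/
def cstf (p : X → ℝ) (z z' : X × Bool) : ℝ :=
  |p z.1 - p z'.1| + |yval z.2 - yval z'.2|

lemma cstf_nonneg (p : X → ℝ) (z z' : X × Bool) : 0 ≤ cstf p z z' :=
  add_nonneg (abs_nonneg _) (abs_nonneg _)

lemma cstf_self (p : X → ℝ) (z : X × Bool) : cstf p z z = 0 := by
  simp [cstf]

lemma sum_prod_bool (f : X × Bool → ℝ) :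
    ∑ z : X × Bool, f z = ∑ x : X, (f (x, false) + f (x, true)) := by
  rw [Fintype.sum_prod_type]
  exact Finset.sum_congr rfl fun x _ => by rw [Fintype.sum_bool]; ring

lemma massx_nonneg {D : X × Bool → ℝ} (hD : IsDistribution D) (x : X) : 0 ≤ massx D x :=
  add_nonneg (hD.1 _) (hD.1 _)

lemma bernD_nonneg {D : X × Bool → ℝ} {p : X → ℝ} (hD : IsDistribution D)
    (hp : IsPredictor p) (z : X × Bool) : 0 ≤ bernD D p z := by
  obtain ⟨x, y⟩ := z
  have h1 := (hp x).1
  have h2 := (hp x).2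
  cases y <;> simp [bernD] <;>
    exact mul_nonneg (massx_nonneg hD x) (by linarith)

lemma bernD_sum {D : X × Bool → ℝ} (hD : IsDistribution D) (p : X → ℝ) :
    ∑ z : X × Bool, bernD D p z = 1 := by
  rw [sum_prod_bool]
  have h1 : ∀ x : X, bernD D p (x, false) + bernD D p (x, true) = massx D x := by
    intro x; simp [bernD]; ring
  rw [Finset.sum_congr rfl fun x _ => h1 x]
  have h2 := hD.2
  rw [sum_prod_bool] at h2
  exact h2

lemma D_le_one {D : X × Bool → ℝ} (hD : IsDistribution D) (z : X × Bool) : D z ≤ 1 := by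
  have := Finset.single_le_sum (f := D) (fun i _ => hD.1 i) (Finset.mem_univ z)
  rw [hD.2] at this
  exact this

/-- Splitting a sum against a coupling into its two marginals. -/
lemma coupling_split {D1 D2 : X × Bool → ℝ} {γ : (X × Bool) × (X × Bool) → ℝ}
    (hγ : IsCoupling D1 D2 γ) (F G : X × Bool → ℝ) :
    ∑ e : (X × Bool) × (X × Bool), γ e * (F e.1 - G e.2)
      = ∑ z : X × Bool, D1 z * F z - ∑ z : X × Bool, D2 z * G z := by
  have h : ∀ e : (X × Bool) × (X × Bool), γ e * (F e.1 - G e.2)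
      = γ e * F e.1 - γ e * G e.2 := fun e => by ring
  simp_rw [h]
  rw [Finset.sum_sub_distrib]
  congr 1
  · rw [Fintype.sum_prod_type]
    refine Finset.sum_congr rfl fun z _ => ?_
    have : ∑ z' : X × Bool, γ (z, z') * F z = (∑ z' : X × Bool, γ (z, z')) * F z := by
      rw [Finset.sum_mul]
    rw [this, hγ.2.1 z, mul_comm]
  · rw [Fintype.sum_prod_type, Finset.sum_comm]
    refine Finset.sum_congr rfl fun z' _ => ?_
    have : ∑ z : X × Bool, γ (z, z') * G z' = (∑ z : X × Bool, γ (z, z')) * G z' := by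
      rw [Finset.sum_mul]
    rw [this, hγ.2.2 z', mul_comm]

/-- The basic identity: the smCE integrand equals a difference of expectations of
`h(z) = (yval z.2 - 1/2) * w (p z.1)` under `D` and `bernD`. -/
lemma expval_eq_h {D : X × Bool → ℝ} (p : X → ℝ) (w : ℝ → ℝ) :
    expval D (fun z => w (p z.1) * (yval z.2 - p z.1))
      = ∑ z : X × Bool, D z * ((yval z.2 - 1/2) * w (p z.1))
        - ∑ z : X × Bool, bernD D p z * ((yval z.2 - 1/2) * w (p z.1)) := by
  unfold expval
  rw [← Finset.sum_sub_distrib, sum_prod_bool, sum_prod_bool]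
  refine Finset.sum_congr rfl fun x _ => ?_
  simp [bernD, massx, yval]
  ring

lemma h_pointwise {p : X → ℝ} (hp : IsPredictor p) {w : ℝ → ℝ}
    (hw1 : ∀ v ∈ Set.Icc (0 : ℝ) 1, w v ∈ Set.Icc (-1 : ℝ) 1)
    (hw2 : ∀ v ∈ Set.Icc (0 : ℝ) 1, ∀ v' ∈ Set.Icc (0 : ℝ) 1, |w v - w v'| ≤ |v - v'|)
    (z z' : X × Bool) :
    |(yval z.2 - 1/2) * w (p z.1) - (yval z'.2 - 1/2) * w (p z'.1)| ≤ cstf p z z' := by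
  have hv := hp z.1
  have hu := hp z'.1
  have h1 : |w (p z.1) - w (p z'.1)| ≤ |p z.1 - p z'.1| := hw2 _ hv _ hu
  have h2 : |w (p z'.1)| ≤ 1 := abs_le.2 ⟨(hw1 _ hu).1, (hw1 _ hu).2⟩
  have key : (yval z.2 - 1/2) * w (p z.1) - (yval z'.2 - 1/2) * w (p z'.1)
      = (yval z.2 - 1/2) * (w (p z.1) - w (p z'.1)) + (yval z.2 - yval z'.2) * w (p z'.1) := by
    ring
  rw [key]
  refine (abs_add_le _ _).trans ?_
  rw [abs_mul, abs_mul]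
  have hy : |yval z.2 - 1/2| = 1/2 := by cases z.2 <;> norm_num [yval]
  rw [hy]
  have h3 : |yval z.2 - yval z'.2| * |w (p z'.1)| ≤ |yval z.2 - yval z'.2| * 1 :=
    mul_le_mul_of_nonneg_left h2 (abs_nonneg _)
  have h4 : (1:ℝ)/2 * |w (p z.1) - w (p z'.1)| ≤ 1/2 * |p z.1 - p z'.1| := by linarith
  have h5 : (0:ℝ) ≤ |p z.1 - p z'.1| := abs_nonneg _
  unfold cstf
  linarith

end AuxDev

/-! ### Walk sums, perturbations, potentials -/

section Walks

variable {α β : Type}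

/-- Sum of edge weights along a list of nodes. -/
def wsum (L : α → α → ℝ) : List α → ℝ
  | [] => 0
  | [_] => 0
  | u :: w :: t => L u w + wsum L (w :: t)

/-- The perturbation of a coupling induced by a walk; `A u w` is the "partner"
(row index) used for the step from `u` to `w`. -/
def pertF (A : α → α → β) : List α → (β × α) → ℝ
  | [], _ => 0
  | [_], _ => 0
  | u :: w :: t, e => ((if (A u w, u) = e then (1:ℝ) else 0)
      - (if (A u w, w) = e then (1:ℝ) else 0)) + pertF A (w :: t) e

variable [Fintype α] [Fintype β]

lemma sum_indic_snd (a : β) (u : α) (z : β) :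
    ∑ z' : α, (if ((a, u) : β × α) = (z, z') then (1:ℝ) else 0)
      = if a = z then 1 else 0 := by
  by_cases h : a = z
  · subst h
    simp [Prod.ext_iff]
  · simp [Prod.ext_iff, h]

lemma sum_indic_fst (a : β) (u : α) (z' : α) :
    ∑ z : β, (if ((a, u) : β × α) = (z, z') then (1:ℝ) else 0)
      = if u = z' then 1 else 0 := by
  by_cases h : u = z'
  · subst h
    simp [Prod.ext_iff]
  · simp [Prod.ext_iff, h]

lemma pert_row (A : α → α → β) : ∀ (l : List α) (z : β),
    ∑ z' : α, pertF A l (z, z') = 0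
  | [], z => by simp [pertF]
  | [x], z => by simp [pertF]
  | u :: w :: t, z => by
    have ih := pert_row A (w :: t) z
    simp only [pertF]
    rw [Finset.sum_add_distrib, ih, add_zero, Finset.sum_sub_distrib,
      sum_indic_snd, sum_indic_snd, sub_self]

lemma pert_col (A : α → α → β) : ∀ (l : List α) (z' : α),
    ∑ z : β, pertF A l (z, z')
      = (if l.head? = some z' then (1:ℝ) else 0)
        - (if l.getLast? = some z' then (1:ℝ) else 0)
  | [], z' => by simp [pertF]
  | [x], z' => by simp [pertF]
  | u :: w :: t, z' => by
    have ih := pert_col A (w :: t) z'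
    simp only [pertF]
    rw [Finset.sum_add_distrib, ih, Finset.sum_sub_distrib,
      sum_indic_fst, sum_indic_fst]
    have h1 : (u :: w :: t).head? = some u := rfl
    have h2 : (w :: t).head? = some w := rfl
    have h3 : (u :: w :: t).getLast? = (w :: t).getLast? := List.getLast?_cons_cons
    rw [h1, h2, h3]
    have e1 : (if (some u : Option α) = some z' then (1:ℝ) else 0)
        = if u = z' then 1 else 0 := by simp
    have e2 : (if (some w : Option α) = some z' then (1:ℝ) else 0)
        = if w = z' then 1 else 0 := by simp
    rw [e1, e2]
    ring

lemma pert_cost (A : α → α → β) (C : β × α → ℝ) : ∀ l : List α,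
    ∑ e : β × α, pertF A l e * C e
      = wsum (fun u w => C (A u w, u) - C (A u w, w)) l
  | [] => by simp [pertF, wsum]
  | [x] => by simp [pertF, wsum]
  | u :: w :: t => by
    have ih := pert_cost A C (w :: t)
    simp only [pertF, wsum]
    simp_rw [add_mul, sub_mul]
    rw [Finset.sum_add_distrib, ih, Finset.sum_sub_distrib]
    have h1 : ∑ e : β × α, (if (A u w, u) = e then (1:ℝ) else 0) * C e = C (A u w, u) := by
      simp_rw [ite_mul, one_mul, zero_mul]
      rw [Finset.sum_ite_eq]
      simp
    have h2 : ∑ e : β × α, (if (A u w, w) = e then (1:ℝ) else 0) * C e = C (A u w, w) := by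
      simp_rw [ite_mul, one_mul, zero_mul]
      rw [Finset.sum_ite_eq]
      simp
    rw [h1, h2]

lemma pert_neg (A : α → α → β) : ∀ (l : List α) (e : β × α),
    pertF A l e < 0 → ∃ u w, w ∈ l ∧ e = (A u w, w)
  | [], e => by simp [pertF]
  | [x], e => by simp [pertF]
  | u :: w :: t, e => by
    intro h
    by_cases he : (A u w, w) = e
    · exact ⟨u, w, by simp, he.symm⟩
    · have h1 : (if (A u w, u) = e then (1:ℝ) else 0)
          - (if (A u w, w) = e then (1:ℝ) else 0) ≥ 0 := by
        rw [if_neg he]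
        split <;> norm_num
      have h2 : pertF A (w :: t) e < 0 := by
        simp only [pertF] at h
        linarith
      obtain ⟨u', w', hw', he'⟩ := pert_neg A (w :: t) e h2
      exact ⟨u', w', List.mem_cons_of_mem _ hw', he'⟩

lemma pert_lb (A : α → α → β) : ∀ (l : List α) (e : β × α),
    -(l.length : ℝ) ≤ pertF A l e
  | [], e => by simp [pertF]
  | [x], e => by simp [pertF]
  | u :: w :: t, e => by
    have ih := pert_lb A (w :: t) e
    simp only [pertF, List.length_cons] at *
    push_cast
    split_ifs <;> push_cast at ih <;> linarith

end Walks

section Potentials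

variable {α : Type}

/-- Expand a walk for the shortcut weights `min (L u w) (L u v + L v w)` into a walk
for the original weights by inserting `v` where the shortcut is used. -/
def expandW (L : α → α → ℝ) (v : α) : List α → List α
  | [] => []
  | [x] => [x]
  | u :: w :: t => if L u v + L v w < L u w then u :: v :: expandW L v (w :: t)
      else u :: expandW L v (w :: t)

lemma expandW_cons (L : α → α → ℝ) (v w : α) (t : List α) :
    ∃ t', expandW L v (w :: t) = w :: t' := by
  cases t with
  | nil => exact ⟨[], rfl⟩
  | cons w2 t2 =>
    rw [expandW]
    split
    · exact ⟨_, rfl⟩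
    · exact ⟨_, rfl⟩

lemma expandW_head (L : α → α → ℝ) (v : α) : ∀ l : List α,
    (expandW L v l).head? = l.head?
  | [] => rfl
  | [x] => rfl
  | u :: w :: t => by
    rw [expandW]
    split <;> rfl

lemma expandW_getLast (L : α → α → ℝ) (v : α) : ∀ l : List α,
    (expandW L v l).getLast? = l.getLast?
  | [] => rfl
  | [x] => rfl
  | u :: w :: t => by
    obtain ⟨t', ht'⟩ := expandW_cons L v w t
    have ih := expandW_getLast L v (w :: t)
    rw [ht'] at ih
    rw [expandW]
    split
    · rw [ht', List.getLast?_cons_cons, List.getLast?_cons_cons, ih,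
        List.getLast?_cons_cons]
    · rw [ht', List.getLast?_cons_cons, ih, List.getLast?_cons_cons]

lemma expandW_mem (L : α → α → ℝ) (v : α) : ∀ l : List α, ∀ x ∈ expandW L v l,
    x = v ∨ x ∈ l
  | [] => by simp [expandW]
  | [x] => by simp [expandW]
  | u :: w :: t => by
    intro x hx
    have ih := expandW_mem L v (w :: t)
    rw [expandW] at hx
    split at hx
    · simp only [List.mem_cons] at hx
      rcases hx with h | h | h
      · right; rw [h]; exact List.mem_cons_self
      · left; exact h
      · rcases ih x h with h' | h'
        · left; exact h'
        · right; exact List.mem_cons_of_mem _ h'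
    · simp only [List.mem_cons] at hx
      rcases hx with h | h
      · right; rw [h]; exact List.mem_cons_self
      · rcases ih x h with h' | h'
        · left; exact h'
        · right; exact List.mem_cons_of_mem _ h'

lemma expandW_wsum (L : α → α → ℝ) (v : α) : ∀ l : List α,
    wsum L (expandW L v l) = wsum (fun u w => min (L u w) (L u v + L v w)) l
  | [] => rfl
  | [x] => rfl
  | u :: w :: t => by
    obtain ⟨t', ht'⟩ := expandW_cons L v w t
    have ih := expandW_wsum L v (w :: t)
    rw [expandW]
    split
    · rename_i h
      rw [ht']
      show L u v + wsum L (v :: w :: t') = _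
      rw [show wsum L (v :: w :: t') = L v w + wsum L (w :: t') from rfl]
      rw [show wsum (fun u w => min (L u w) (L u v + L v w)) (u :: w :: t)
          = min (L u w) (L u v + L v w) + wsum (fun u w => min (L u w) (L u v + L v w)) (w :: t)
          from rfl]
      rw [min_eq_right (le_of_lt h), ← ih, ht']
      show L u v + (L v w + wsum L (w :: t')) = L u v + L v w + wsum L (w :: t')
      ring
    · rename_i h
      rw [ht']
      show L u w + wsum L (w :: t') = _
      rw [show wsum (fun u w => min (L u w) (L u v + L v w)) (u :: w :: t)
          = min (L u w) (L u v + L v w) + wsum (fun u w => min (L u w) (L u v + L v w)) (w :: t)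
          from rfl]
      rw [min_eq_left (not_lt.1 h), ← ih, ht']

/-- Existence of potentials on a finite graph all whose closed walks have
nonnegative weight. -/
lemma exists_potential [DecidableEq α] (V : Finset α) :
    ∀ L : α → α → ℝ,
      (∀ l : List α, (∀ x ∈ l, x ∈ V) → l.head? = l.getLast? → 0 ≤ wsum L l) →
      ∃ ψ : α → ℝ, ∀ u ∈ V, ∀ w ∈ V, ψ w ≤ ψ u + L u w := by
  induction V using Finset.induction_on with
  | empty =>
    intro L _
    exact ⟨fun _ => 0, by simp⟩
  | @insert v V' hv IH =>
    intro L hcyc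
    have hLvv : 0 ≤ L v v := by
      have := hcyc [v, v] (by intro x hx; simp at hx; simp [hx]) rfl
      simpa [wsum] using this
    set L' : α → α → ℝ := fun u w => min (L u w) (L u v + L v w) with hL'
    have hcyc' : ∀ l : List α, (∀ x ∈ l, x ∈ V') → l.head? = l.getLast? →
        0 ≤ wsum L' l := by
      intro l hmem hclosed
      have h1 : wsum L (expandW L v l) = wsum L' l := expandW_wsum L v l
      rw [← h1]
      refine hcyc _ ?_ ?_
      · intro x hx
        rcases expandW_mem L v l x hx with h | h
        · rw [h]; exact Finset.mem_insert_self _ _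
        · exact Finset.mem_insert_of_mem (hmem x h)
      · rw [expandW_head, expandW_getLast]
        exact hclosed
    obtain ⟨ψ', hψ'⟩ := IH L' hcyc'
    rcases V'.eq_empty_or_nonempty with hVe | hVne
    · refine ⟨fun _ => 0, ?_⟩
      intro u hu w hw
      rw [hVe] at hu hw
      simp only [Finset.mem_insert, Finset.notMem_empty, or_false] at hu hw
      rw [hu, hw]
      simpa using hLvv
    · set m := V'.inf' hVne (fun u => ψ' u + L u v) with hm
      refine ⟨fun w => if w = v then m else ψ' w, ?_⟩
      intro u hu w hw
      rcases Finset.mem_insert.1 hu with hu' | hu' <;>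
        rcases Finset.mem_insert.1 hw with hw' | hw'
      · rw [hu', hw']
        simp only [eq_self_iff_true, if_true]
        linarith
      · rw [hu']
        have hwv : w ≠ v := fun h => hv (h ▸ hw')
        simp only [eq_self_iff_true, if_true, if_neg hwv]
        obtain ⟨us, husmem, hmeq⟩ := Finset.exists_mem_eq_inf' hVne (fun u => ψ' u + L u v)
        rw [hm, hmeq]
        have h1 : ψ' w ≤ ψ' us + L' us w := hψ' us husmem w hw'
        have h2 : L' us w ≤ L us v + L v w := min_le_right _ _
        linarith
      · rw [hw']
        have huv : u ≠ v := fun h => hv (h ▸ hu')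
        simp only [eq_self_iff_true, if_true, if_neg huv]
        exact Finset.inf'_le (fun u => ψ' u + L u v) hu'
      · have hwv : w ≠ v := fun h => hv (h ▸ hw')
        have huv : u ≠ v := fun h => hv (h ▸ hu')
        simp only [if_neg hwv, if_neg huv]
        have h1 : ψ' w ≤ ψ' u + L' u w := hψ' u hu' w hw'
        have h2 : L' u w ≤ L u w := min_le_left _ _
        linarith

end Potentials

/-! ### The partner choice and the exchange argument -/

section Exchange

variable {X : Type} [Fintype X]

/-- Choose, among the rows `a` with `γ (a, w) > 0`, one minimizing
`cstf p a u - cstf p a w`. -/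
def pickA (p : X → ℝ) (γ : (X × Bool) × (X × Bool) → ℝ) (u w : X × Bool) : X × Bool :=
  if h : (Finset.univ.filter fun a => 0 < γ (a, w)).Nonempty then
    (Finset.exists_min_image (Finset.univ.filter fun a => 0 < γ (a, w))
      (fun a => cstf p a u - cstf p a w) h).choose
  else u

lemma pickA_spec (p : X → ℝ) (γ : (X × Bool) × (X × Bool) → ℝ) (u w : X × Bool)
    (h : ∃ a, 0 < γ (a, w)) :
    0 < γ (pickA p γ u w, w) ∧
      ∀ a, 0 < γ (a, w) →
        cstf p (pickA p γ u w) u - cstf p (pickA p γ u w) w ≤ cstf p a u - cstf p a w := by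
  have hne : (Finset.univ.filter fun a => 0 < γ (a, w)).Nonempty :=
    ⟨h.choose, Finset.mem_filter.2 ⟨Finset.mem_univ _, h.choose_spec⟩⟩
  rw [pickA, dif_pos hne]
  obtain ⟨hmem, hmin⟩ := (Finset.exists_min_image (Finset.univ.filter fun a => 0 < γ (a, w))
      (fun a => cstf p a u - cstf p a w) hne).choose_spec
  exact ⟨(Finset.mem_filter.1 hmem).2,
    fun a ha => hmin a (Finset.mem_filter.2 ⟨Finset.mem_univ _, ha⟩)⟩

lemma exists_pos_of_sum_pos {ι : Type} {s : Finset ι} {f : ι → ℝ}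
    (h : 0 < ∑ i ∈ s, f i) : ∃ i ∈ s, 0 < f i := by
  by_contra hc
  push_neg at hc
  have := Finset.sum_nonpos hc
  linarith

/-- Nonnegativity of closed walks in the partner graph of an optimal coupling. -/
lemma walk_nonneg {D : X × Bool → ℝ} {p : X → ℝ} (hD : IsDistribution D)
    (γ : (X × Bool) × (X × Bool) → ℝ) (hγ : IsCoupling D (bernD D p) γ)
    (hmin : ∀ γ', IsCoupling D (bernD D p) γ' →
      (∑ e : (X × Bool) × (X × Bool), γ e * cstf p e.1 e.2)
        ≤ ∑ e : (X × Bool) × (X × Bool), γ' e * cstf p e.1 e.2)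
    (l : List (X × Bool)) (hl : ∀ x ∈ l, 0 < bernD D p x)
    (hcl : l.head? = l.getLast?) :
    0 ≤ wsum (fun u w => cstf p (pickA p γ u w) u - cstf p (pickA p γ u w) w) l := by
  classical
  have hpartner : ∀ w ∈ l, ∃ a, 0 < γ (a, w) := by
    intro w hw
    have h1 : 0 < ∑ z : X × Bool, γ (z, w) := by
      rw [hγ.2.2]
      exact hl w hw
    obtain ⟨a, _, ha⟩ := exists_pos_of_sum_pos h1
    exact ⟨a, ha⟩
  have htot : (0:ℝ) < ∑ e : (X × Bool) × (X × Bool), γ e := by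
    rw [Fintype.sum_prod_type]
    have : ∀ z : X × Bool, ∑ z' : X × Bool, γ (z, z') = D z := hγ.2.1
    rw [Finset.sum_congr rfl (fun z _ => this z), hD.2]
    norm_num
  have hsupne : (Finset.univ.filter fun e => 0 < γ e).Nonempty := by
    obtain ⟨e, _, he⟩ := exists_pos_of_sum_pos htot
    exact ⟨e, Finset.mem_filter.2 ⟨Finset.mem_univ _, he⟩⟩
  set m0 := (Finset.univ.filter fun e => 0 < γ e).inf' hsupne γ with hm0
  have hm0pos : 0 < m0 := by
    rw [hm0, Finset.lt_inf'_iff]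
    exact fun e he => (Finset.mem_filter.1 he).2
  set n : ℝ := (l.length : ℝ) with hn
  have hnn : 0 ≤ n := by rw [hn]; positivity
  set ε : ℝ := m0 / (n + 1) with hε
  have hεpos : 0 < ε := div_pos hm0pos (by linarith)
  set A : (X × Bool) → (X × Bool) → (X × Bool) := fun u w => pickA p γ u w with hA
  set γ2 : (X × Bool) × (X × Bool) → ℝ := fun e => γ e + ε * pertF A l e with hγ2
  have hεn : ε * n ≤ m0 := by
    rw [hε, div_mul_eq_mul_div, div_le_iff₀ (by linarith : (0:ℝ) < n + 1)]
    nlinarith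
  have hγ2c : IsCoupling D (bernD D p) γ2 := by
    refine ⟨?_, ?_, ?_⟩
    · intro e
      rcases le_or_gt 0 (pertF A l e) with h | h
      · have := hγ.1 e
        have := mul_nonneg hεpos.le h
        simp only [hγ2]
        linarith
      · have h2 : 0 < γ e := by
          obtain ⟨u, w, hwmem, he⟩ := pert_neg A l e h
          rw [he]
          exact (pickA_spec p γ u w (hpartner w hwmem)).1
        have hge : m0 ≤ γ e := by
          rw [hm0]
          exact Finset.inf'_le γ (Finset.mem_filter.2 ⟨Finset.mem_univ _, h2⟩)
        have hlb : -(n) ≤ pertF A l e := by rw [hn]; exact pert_lb A l e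
        have : ε * (-(pertF A l e)) ≤ ε * n := by
          apply mul_le_mul_of_nonneg_left _ hεpos.le
          linarith
        simp only [hγ2]
        nlinarith
    · intro z
      simp only [hγ2]
      rw [Finset.sum_add_distrib, hγ.2.1, ← Finset.mul_sum, pert_row, mul_zero, add_zero]
    · intro z'
      simp only [hγ2]
      rw [Finset.sum_add_distrib, hγ.2.2, ← Finset.mul_sum, pert_col, hcl, sub_self,
        mul_zero, add_zero]
  have hc := hmin γ2 hγ2c
  have hcost : ∑ e : (X × Bool) × (X × Bool), γ2 e * cstf p e.1 e.2
      = (∑ e : (X × Bool) × (X × Bool), γ e * cstf p e.1 e.2)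
        + ε * wsum (fun u w => cstf p (pickA p γ u w) u - cstf p (pickA p γ u w) w) l := by
    simp only [hγ2]
    simp_rw [add_mul]
    rw [Finset.sum_add_distrib]
    congr 1
    simp_rw [mul_assoc]
    rw [← Finset.mul_sum]
    congr 1
    have := pert_cost A (fun e : (X × Bool) × (X × Bool) => cstf p e.1 e.2) l
    simpa [hA] using this
  rw [hcost] at hc
  have h0 : 0 ≤ ε * wsum (fun u w => cstf p (pickA p γ u w) u - cstf p (pickA p γ u w) w) l := by
    linarith
  exact le_of_mul_le_mul_left (by linarith : ε * 0 ≤ ε * wsum (fun u w => cstf p (pickA p γ u w) u - cstf p (pickA p γ u w) w) l) hεpos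

end Exchange

/-! ### Main theorem -/

/-- `EMD(J*, J^p)/2 ≤ smCE(p, D*) ≤ EMD(J*, J^p)`. -/
theorem smCE_vs_EMD
    {X : Type} [Fintype X] (D : X × Bool → ℝ) (hD : IsDistribution D)
    (p : X → ℝ) (hp : IsPredictor p) :
    EMD D p / 2 ≤ smCE D p ∧ smCE D p ≤ EMD D p := by
  classical
  set S : Set ℝ := {e : ℝ | ∃ w : ℝ → ℝ,
    (∀ v ∈ Set.Icc (0 : ℝ) 1, w v ∈ Set.Icc (-1 : ℝ) 1) ∧
    (∀ v ∈ Set.Icc (0 : ℝ) 1, ∀ v' ∈ Set.Icc (0 : ℝ) 1, |w v - w v'| ≤ |v - v'|) ∧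
    e = |expval D (fun z => w (p z.1) * (yval z.2 - p z.1))|} with hS
  set T : Set ℝ := {c : ℝ | ∃ γ : (X × Bool) × (X × Bool) → ℝ, IsCoupling D (bernD D p) γ ∧
    c = ∑ w : (X × Bool) × (X × Bool),
      γ w * (|p w.1.1 - p w.2.1| + |yval w.1.2 - yval w.2.2|)} with hT
  have hsmCE : smCE D p = sSup S := rfl
  have hEMD : EMD D p = sInf T := rfl
  have hS0 : (0:ℝ) ∈ S := by
    refine ⟨fun _ => 0, fun v _ => by norm_num, fun v _ v' _ => by simp, ?_⟩
    simp [expval]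
  have hSne : S.Nonempty := ⟨0, hS0⟩
  have hSbdd : BddAbove S := by
    refine ⟨1, fun e he => ?_⟩
    obtain ⟨w, hw1, hw2, rfl⟩ := he
    have hb : ∀ z : X × Bool, |w (p z.1) * (yval z.2 - p z.1)| ≤ 1 := by
      intro z
      rw [abs_mul]
      have h1 : |w (p z.1)| ≤ 1 := abs_le.2 ⟨(hw1 _ (hp z.1)).1, (hw1 _ (hp z.1)).2⟩
      have h2 : |yval z.2 - p z.1| ≤ 1 := by
        have g1 := (hp z.1).1
        have g2 := (hp z.1).2
        rw [abs_le]
        cases z.2 <;> simp [yval] <;> constructor <;> linarith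
      calc |w (p z.1)| * |yval z.2 - p z.1| ≤ 1 * 1 :=
            mul_le_mul h1 h2 (abs_nonneg _) (by norm_num)
        _ = 1 := by norm_num
    calc |expval D (fun z => w (p z.1) * (yval z.2 - p z.1))|
        ≤ ∑ z : X × Bool, |D z * (w (p z.1) * (yval z.2 - p z.1))| := by
          rw [expval]
          exact Finset.abs_sum_le_sum_abs _ _
      _ ≤ ∑ z : X × Bool, D z * 1 := by
          refine Finset.sum_le_sum fun z _ => ?_
          rw [abs_mul, abs_of_nonneg (hD.1 z)]
          exact mul_le_mul_of_nonneg_left (hb z) (hD.1 z)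
      _ = 1 := by simp only [mul_one]; exact hD.2
  have hsm0 : (0:ℝ) ≤ smCE D p := by rw [hsmCE]; exact le_csSup hSbdd hS0
  -- upper bound : smCE ≤ EMD
  have upper : smCE D p ≤ EMD D p := by
    have hTne : T.Nonempty := by
      refine ⟨_, ⟨fun e => D e.1 * bernD D p e.2, ⟨?_, ?_, ?_⟩, rfl⟩⟩
      · intro e; exact mul_nonneg (hD.1 _) (bernD_nonneg hD hp _)
      · intro z
        show (∑ z' : X × Bool, D z * bernD D p z') = D z
        rw [← Finset.mul_sum, bernD_sum hD p, mul_one]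
      · intro z'
        show (∑ z : X × Bool, D z * bernD D p z') = bernD D p z'
        rw [← Finset.sum_mul, hD.2, one_mul]
    rw [hEMD]
    refine le_csInf hTne ?_
    rintro c ⟨γ, hγ, rfl⟩
    rw [hsmCE]
    refine csSup_le hSne ?_
    rintro e ⟨w, hw1, hw2, rfl⟩
    have h2 := coupling_split hγ (fun z => (yval z.2 - 1/2) * w (p z.1))
      (fun z => (yval z.2 - 1/2) * w (p z.1))
    have hiden : expval D (fun z => w (p z.1) * (yval z.2 - p z.1))
        = ∑ e : (X × Bool) × (X × Bool),
            γ e * ((yval e.1.2 - 1/2) * w (p e.1.1) - (yval e.2.2 - 1/2) * w (p e.2.1)) :=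
      (expval_eq_h (D := D) p w).trans h2.symm
    rw [hiden]
    calc |∑ e : (X × Bool) × (X × Bool),
            γ e * ((yval e.1.2 - 1/2) * w (p e.1.1) - (yval e.2.2 - 1/2) * w (p e.2.1))|
        ≤ ∑ e : (X × Bool) × (X × Bool),
            |γ e * ((yval e.1.2 - 1/2) * w (p e.1.1) - (yval e.2.2 - 1/2) * w (p e.2.1))| :=
          Finset.abs_sum_le_sum_abs _ _
      _ ≤ ∑ e : (X × Bool) × (X × Bool),
            γ e * (|p e.1.1 - p e.2.1| + |yval e.1.2 - yval e.2.2|) := by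
          refine Finset.sum_le_sum fun e _ => ?_
          rw [abs_mul, abs_of_nonneg (hγ.1 e)]
          exact mul_le_mul_of_nonneg_left (h_pointwise hp hw1 hw2 e.1 e.2) (hγ.1 e)
  -- lower bound : EMD ≤ 2 * smCE
  have lower : EMD D p ≤ 2 * smCE D p := by
    set K : Set ((X × Bool) × (X × Bool) → ℝ) := {γ | IsCoupling D (bernD D p) γ} with hK
    have hKne : K.Nonempty := by
      refine ⟨fun e => D e.1 * bernD D p e.2, ?_, ?_, ?_⟩
      · intro e; exact mul_nonneg (hD.1 _) (bernD_nonneg hD hp _)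
      · intro z
        show (∑ z' : X × Bool, D z * bernD D p z') = D z
        rw [← Finset.mul_sum, bernD_sum hD p, mul_one]
      · intro z'
        show (∑ z : X × Bool, D z * bernD D p z') = bernD D p z'
        rw [← Finset.sum_mul, hD.2, one_mul]
    have hKcl : IsClosed K := by
      have hrep : K = (⋂ e : (X × Bool) × (X × Bool),
            {γ : (X × Bool) × (X × Bool) → ℝ | 0 ≤ γ e})
          ∩ ((⋂ z : X × Bool,
              {γ : (X × Bool) × (X × Bool) → ℝ | (∑ z' : X × Bool, γ (z, z')) = D z})
            ∩ (⋂ z' : X × Bool,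
              {γ : (X × Bool) × (X × Bool) → ℝ |
                (∑ z : X × Bool, γ (z, z')) = bernD D p z'})) := by
        ext γ
        simp only [hK, Set.mem_setOf_eq, Set.mem_inter_iff, Set.mem_iInter, IsCoupling]
      rw [hrep]
      refine IsClosed.inter
        (isClosed_iInter fun e => isClosed_le continuous_const (continuous_apply e))
        (IsClosed.inter
          (isClosed_iInter fun z => isClosed_eq
            (continuous_finset_sum _ fun z' _ => continuous_apply (z, z')) continuous_const)
          (isClosed_iInter fun z' => isClosed_eq
            (continuous_finset_sum _ fun z _ => continuous_apply (z, z')) continuous_const))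
    have hKsub : K ⊆ Set.pi Set.univ
        (fun _ : (X × Bool) × (X × Bool) => Set.Icc (0:ℝ) 1) := by
      intro γ hγm e _
      refine ⟨hγm.1 e, ?_⟩
      have h1 : γ e ≤ ∑ z' : X × Bool, γ (e.1, z') :=
        Finset.single_le_sum (f := fun z' => γ (e.1, z'))
          (fun z' _ => hγm.1 (e.1, z')) (Finset.mem_univ e.2)
      rw [hγm.2.1 e.1] at h1
      exact h1.trans (D_le_one hD e.1)
    have hKcpt : IsCompact K :=
      IsCompact.of_isClosed_subset (isCompact_univ_pi fun _ => isCompact_Icc) hKcl hKsub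
    have hCcont : Continuous (fun γ : (X × Bool) × (X × Bool) → ℝ =>
        ∑ e : (X × Bool) × (X × Bool), γ e * cstf p e.1 e.2) :=
      continuous_finset_sum _ fun e _ => (continuous_apply e).mul continuous_const
    obtain ⟨γs, hγsK, hminOn⟩ := hKcpt.exists_isMinOn hKne hCcont.continuousOn
    have hγs : IsCoupling D (bernD D p) γs := hγsK
    have hmin : ∀ γ', IsCoupling D (bernD D p) γ' →
        (∑ e : (X × Bool) × (X × Bool), γs e * cstf p e.1 e.2)
          ≤ ∑ e : (X × Bool) × (X × Bool), γ' e * cstf p e.1 e.2 :=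
      fun γ' hγ' => isMinOn_iff.mp hminOn γ' hγ'
    have hTbdd : BddBelow T := by
      refine ⟨0, fun c hc => ?_⟩
      obtain ⟨γ, hγ, rfl⟩ := hc
      exact Finset.sum_nonneg fun e _ =>
        mul_nonneg (hγ.1 e) (add_nonneg (abs_nonneg _) (abs_nonneg _))
    have hEMDle : EMD D p ≤ ∑ e : (X × Bool) × (X × Bool), γs e * cstf p e.1 e.2 := by
      rw [hEMD]
      exact csInf_le hTbdd ⟨γs, hγs, rfl⟩
    set Bp : Finset (X × Bool) := Finset.univ.filter (fun b => 0 < bernD D p b) with hBp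
    set Lg : (X × Bool) → (X × Bool) → ℝ :=
      fun u w => cstf p (pickA p γs u w) u - cstf p (pickA p γs u w) w with hLg
    obtain ⟨ψ, hψ⟩ := exists_potential Bp Lg (by
      intro l hmem hcl
      exact walk_nonneg hD γs hγs hmin l
        (fun x hx => (Finset.mem_filter.1 (hmem x hx)).2) hcl)
    have hψrelax : ∀ u ∈ Bp, ∀ b ∈ Bp, ∀ a, 0 < γs (a, b) →
        ψ b ≤ ψ u + (cstf p a u - cstf p a b) := by
      intro u hu b hb a ha
      have h1 := hψ u hu b hb
      simp only [hLg] at h1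
      have h2 := (pickA_spec p γs u b ⟨a, ha⟩).2 a ha
      linarith
    have hBne : Bp.Nonempty := by
      have h1 : (0:ℝ) < ∑ z : X × Bool, bernD D p z := by
        rw [bernD_sum hD p]; norm_num
      obtain ⟨b, _, hb⟩ := exists_pos_of_sum_pos h1
      exact ⟨b, Finset.mem_filter.2 ⟨Finset.mem_univ _, hb⟩⟩
    set φb : ℝ → Bool → ℝ := fun v y =>
      Bp.inf' hBne (fun b => |v - p b.1| + |yval y - yval b.2| + ψ b) with hφb
    set w0 : ℝ → ℝ := fun v => (φb v true - φb v false) / 2 with hw0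
    have hφb_le : ∀ (v : ℝ) (y : Bool), ∀ b ∈ Bp,
        φb v y ≤ |v - p b.1| + |yval y - yval b.2| + ψ b := by
      intro v y b hb
      simp only [hφb]
      exact Finset.inf'_le _ hb
    have hslack : ∀ a b : X × Bool, 0 < γs (a, b) →
        φb (p a.1) a.2 = cstf p a b + ψ b := by
      intro a b hab
      have hbBp : b ∈ Bp := by
        refine Finset.mem_filter.2 ⟨Finset.mem_univ _, ?_⟩
        have h1 : γs (a, b) ≤ ∑ z : X × Bool, γs (z, b) :=
          Finset.single_le_sum (f := fun z => γs (z, b))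
            (fun z _ => hγs.1 (z, b)) (Finset.mem_univ a)
        rw [hγs.2.2 b] at h1
        linarith
      refine le_antisymm ?_ ?_
      · exact hφb_le (p a.1) a.2 b hbBp
      · simp only [hφb]
        refine Finset.le_inf' hBne _ fun b' hb' => ?_
        have h1 := hψrelax b' hb' b hbBp a hab
        have hcst' : cstf p a b' = |p a.1 - p b'.1| + |yval a.2 - yval b'.2| := rfl
        rw [← hcst']
        have hcst : cstf p a b = |p a.1 - p b.1| + |yval a.2 - yval b.2| := rfl
        linarith
    have hφb_psi : ∀ b ∈ Bp, φb (p b.1) b.2 ≤ ψ b := by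
      intro b hb
      have := hφb_le (p b.1) b.2 b hb
      simpa using this
    have hφb_lipv : ∀ (v v' : ℝ) (y : Bool), φb v y ≤ φb v' y + |v - v'| := by
      intro v v' y
      obtain ⟨b, hb, hbeq⟩ := Finset.exists_mem_eq_inf' hBne
        (fun b => |v' - p b.1| + |yval y - yval b.2| + ψ b)
      have h1 : φb v' y = |v' - p b.1| + |yval y - yval b.2| + ψ b := by
        simp only [hφb]; exact hbeq
      have h2 := hφb_le v y b hb
      have h3 : |v - p b.1| ≤ |v' - p b.1| + |v - v'| := by
        have hrw : v - p b.1 = (v - v') + (v' - p b.1) := by ring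
        rw [hrw]
        calc |(v - v') + (v' - p b.1)| ≤ |v - v'| + |v' - p b.1| := abs_add_le _ _
          _ = |v' - p b.1| + |v - v'| := by ring
      linarith
    have hφb_y : ∀ (v : ℝ) (y y' : Bool), φb v y ≤ φb v y' + |yval y - yval y'| := by
      intro v y y'
      obtain ⟨b, hb, hbeq⟩ := Finset.exists_mem_eq_inf' hBne
        (fun b => |v - p b.1| + |yval y' - yval b.2| + ψ b)
      have h1 : φb v y' = |v - p b.1| + |yval y' - yval b.2| + ψ b := by
        simp only [hφb]; exact hbeq
      have h2 := hφb_le v y b hb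
      have h3 : |yval y - yval b.2| ≤ |yval y' - yval b.2| + |yval y - yval y'| := by
        have hrw : yval y - yval b.2 = (yval y - yval y') + (yval y' - yval b.2) := by ring
        rw [hrw]
        calc |(yval y - yval y') + (yval y' - yval b.2)|
            ≤ |yval y - yval y'| + |yval y' - yval b.2| := abs_add_le _ _
          _ = |yval y' - yval b.2| + |yval y - yval y'| := by ring
      linarith
    have hw0_bdd : ∀ v : ℝ, |w0 v| ≤ 1/2 := by
      intro v
      have h1 := hφb_y v true false
      have h2 := hφb_y v false true
      have hyv : |yval true - yval false| = 1 := by norm_num [yval]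
      have hyv' : |yval false - yval true| = 1 := by norm_num [yval]
      rw [hyv] at h1
      rw [hyv'] at h2
      have habs : |φb v true - φb v false| ≤ 1 := abs_le.2 ⟨by linarith, by linarith⟩
      simp only [hw0]
      calc |(φb v true - φb v false) / 2| = |φb v true - φb v false| / 2 := by
            rw [abs_div]; norm_num
        _ ≤ 1/2 := by linarith
    have hw0_mem : ∀ v ∈ Set.Icc (0:ℝ) 1, w0 v ∈ Set.Icc (-1:ℝ) 1 := by
      intro v _
      have h := hw0_bdd v
      rw [abs_le] at h
      exact ⟨by linarith [h.1], by linarith [h.2]⟩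
    have hw0_lip : ∀ v ∈ Set.Icc (0:ℝ) 1, ∀ v' ∈ Set.Icc (0:ℝ) 1,
        |w0 v - w0 v'| ≤ |v - v'| := by
      intro v _ v' _
      have h1 := hφb_lipv v v' true
      have h2 := hφb_lipv v' v true
      have h3 := hφb_lipv v v' false
      have h4 := hφb_lipv v' v false
      have hsym : |v' - v| = |v - v'| := abs_sub_comm _ _
      rw [hsym] at h2 h4
      simp only [hw0]
      exact abs_le.2 ⟨by linarith, by linarith⟩
    set W : ℝ := expval D (fun z => w0 (p z.1) * (yval z.2 - p z.1)) with hW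
    have hWmem : |W| ∈ S := ⟨w0, hw0_mem, hw0_lip, rfl⟩
    set Φf : X × Bool → ℝ := fun z => φb (p z.1) z.2 with hΦf
    have hch1 : (∑ e : (X × Bool) × (X × Bool), γs e * cstf p e.1 e.2)
        = ∑ z : X × Bool, D z * Φf z - ∑ z : X × Bool, bernD D p z * ψ z := by
      have hper : ∀ e : (X × Bool) × (X × Bool),
          γs e * cstf p e.1 e.2 = γs e * (Φf e.1 - ψ e.2) := by
        intro e
        rcases (hγs.1 e).lt_or_eq with h | h
        · have hs := hslack e.1 e.2 h
          simp only [hΦf]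
          rw [hs]
          ring
        · rw [← h]; ring
      rw [Finset.sum_congr rfl fun e _ => hper e]
      exact coupling_split hγs Φf ψ
    have hch2 : ∑ z : X × Bool, bernD D p z * Φf z
        ≤ ∑ z : X × Bool, bernD D p z * ψ z := by
      refine Finset.sum_le_sum fun z _ => ?_
      rcases (bernD_nonneg hD hp z).lt_or_eq with h | h
      · have hz : z ∈ Bp := Finset.mem_filter.2 ⟨Finset.mem_univ _, h⟩
        have := hφb_psi z hz
        simp only [hΦf]
        exact mul_le_mul_of_nonneg_left this (le_of_lt h)
      · rw [← h]; simp
    have hch3 : ∑ z : X × Bool, D z * Φf z - ∑ z : X × Bool, bernD D p z * Φf z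
        = 2 * W := by
      rw [hW]
      simp only [expval]
      rw [← Finset.sum_sub_distrib, Finset.mul_sum, sum_prod_bool, sum_prod_bool]
      refine Finset.sum_congr rfl fun x _ => ?_
      simp only [hΦf, hw0, bernD, massx, yval]
      simp
      ring
    have hsmW : |W| ≤ smCE D p := by rw [hsmCE]; exact le_csSup hSbdd hWmem
    have hWle : W ≤ |W| := le_abs_self W
    linarith [hEMDle]
  exact ⟨by linarith, upper⟩
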